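/- Let X and Y be ℝ^d-valued random variables with finite first moments, and let ε > 0. Let T_ε be a finite subset of the unit sphere S^{d-1} such that every unit vector is within Euclidean distance ε of some element of T_ε. Then the max-sliced Wasserstein distance W₁*(X,Y) = sup over unit vectors t of W₁(t·X, t·Y) satisfies |W₁*(X,Y) − max over t ∈ T_ε of W₁(t·X, t·Y)| ≤ ε·(E‖X‖ + E‖Y‖). -/

import Mathlib

open MeasureTheory ENNReal ProbabilityTheory
open scoped RealInnerProductSpace

/-- 1-Wasserstein distance: infimum over couplings of the expected distance. -/
noncomputable def W1 {B : Type*} [NormedAddCommGroup B] [MeasurableSpace B]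
    (μ ν : Measure B) : ℝ≥0∞ :=
  ⨅ (π : Measure (B × B)) (_ : π.map Prod.fst = μ) (_ : π.map Prod.snd = ν),
    ∫⁻ p, ‖p.1 - p.2‖₊ ∂π

lemma W1_le_cost {B : Type*} [NormedAddCommGroup B] [MeasurableSpace B] {μ ν : Measure B}
    (π : Measure (B × B)) (h1 : π.map Prod.fst = μ) (h2 : π.map Prod.snd = ν) :
    W1 μ ν ≤ ∫⁻ p, ‖p.1 - p.2‖₊ ∂π :=
  iInf_le_of_le π (iInf_le_of_le h1 (iInf_le _ h2))

lemma W1_map_le {Ω : Type*} [MeasurableSpace Ω] (P : Measure Ω) {f g : Ω → ℝ}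
    (hf : AEMeasurable f P) (hg : AEMeasurable g P) :
    W1 (P.map f) (P.map g) ≤ ∫⁻ ω, ‖f ω - g ω‖₊ ∂P := by
  have hpair : AEMeasurable (fun ω => (f ω, g ω)) P := hf.prodMk hg
  have h1 : (P.map fun ω => (f ω, g ω)).map Prod.fst = P.map f :=
    AEMeasurable.map_map_of_aemeasurable measurable_fst.aemeasurable hpair
  have h2 : (P.map fun ω => (f ω, g ω)).map Prod.snd = P.map g :=
    AEMeasurable.map_map_of_aemeasurable measurable_snd.aemeasurable hpair
  refine (W1_le_cost _ h1 h2).trans_eq ?_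
  rw [lintegral_map' (show Measurable (fun p : ℝ × ℝ => (‖p.1 - p.2‖₊ : ℝ≥0∞)) from
    (measurable_fst.sub measurable_snd).enorm).aemeasurable hpair]

lemma W1_triangle (μ ν ξ : Measure ℝ) [IsProbabilityMeasure μ] [IsProbabilityMeasure ν]
    [IsProbabilityMeasure ξ] : W1 μ ξ ≤ W1 μ ν + W1 ν ξ := by
  have key : ∀ (π₁ : Measure (ℝ × ℝ)), π₁.map Prod.fst = μ → π₁.map Prod.snd = ν →
      ∀ (π₂ : Measure (ℝ × ℝ)), π₂.map Prod.fst = ν → π₂.map Prod.snd = ξ →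
      W1 μ ξ ≤ (∫⁻ p, ‖p.1 - p.2‖₊ ∂π₁) + ∫⁻ p, ‖p.1 - p.2‖₊ ∂π₂ := by
    intro π₁ h1f h1s π₂ h2f h2s
    have huniv : ∀ (π : Measure (ℝ × ℝ)) (m : Measure ℝ), π.map Prod.fst = m →
        IsProbabilityMeasure m → IsProbabilityMeasure π := by
      intro π m hm hp
      constructor
      have := hp.measure_univ
      rw [← hm, Measure.map_apply measurable_fst MeasurableSet.univ] at this
      simpa using this
    haveI hπ₁ : IsProbabilityMeasure π₁ := huniv π₁ μ h1f inferInstance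
    haveI hπ₂ : IsProbabilityMeasure π₂ := huniv π₂ ν h2f inferInstance
    set ρ : Measure (ℝ × ℝ) := π₁.map Prod.swap with hρdef
    haveI : IsProbabilityMeasure ρ := Measure.isProbabilityMeasure_map measurable_swap.aemeasurable
    have hρfst : ρ.fst = ν := by
      rw [hρdef, Measure.fst, Measure.map_map measurable_fst measurable_swap]
      exact h1s
    set κ := ρ.condKernel with hκdef
    have hdis : ν ⊗ₘ κ = ρ := by rw [← hρfst]; exact ρ.disintegrate κ
    set κ' : ProbabilityTheory.Kernel (ℝ × ℝ) ℝ := κ.comap Prod.fst measurable_fst with hκ'def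
    set η : Measure ((ℝ × ℝ) × ℝ) := π₂ ⊗ₘ κ' with hηdef
    have hg : Measurable (fun q : (ℝ × ℝ) × ℝ => (q.2, q.1.2)) :=
      measurable_snd.prodMk (measurable_snd.comp measurable_fst)
    set θ : Measure (ℝ × ℝ) := η.map (fun q => (q.2, q.1.2)) with hθdef
    have hηfst : η.map Prod.fst = π₂ := Measure.fst_compProd π₂ κ'
    have hηsnd : η.map Prod.snd = μ := by
      ext s hs
      rw [Measure.map_apply measurable_snd hs, hηdef, Measure.compProd_apply (measurable_snd hs)]
      have hpre : ∀ p : ℝ × ℝ, (Prod.mk p ⁻¹' (Prod.snd ⁻¹' s)) = s := by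
        intro p; ext x; simp
      have hk : ∀ p : ℝ × ℝ, κ' p (Prod.mk p ⁻¹' (Prod.snd ⁻¹' s)) = κ p.1 s := by
        intro p
        rw [hpre, hκ'def, ProbabilityTheory.Kernel.comap_apply']
      simp_rw [hk]
      have e1 : ∫⁻ p, κ p.1 s ∂π₂ = ∫⁻ y, κ y s ∂ν := by
        rw [← h2f]
        exact (lintegral_map (ProbabilityTheory.Kernel.measurable_coe κ hs) measurable_fst).symm
      have e2 : (ν ⊗ₘ κ) (Prod.snd ⁻¹' s) = ∫⁻ y, κ y s ∂ν := by
        rw [Measure.compProd_apply (measurable_snd hs)]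
        refine lintegral_congr fun y => ?_
        congr 1
      have e3 : ρ (Prod.snd ⁻¹' s) = μ s := by
        rw [hρdef, Measure.map_apply measurable_swap (measurable_snd hs)]
        have : (Prod.swap ⁻¹' (Prod.snd ⁻¹' s) : Set (ℝ × ℝ)) = Prod.fst ⁻¹' s := rfl
        rw [this, ← Measure.map_apply measurable_fst hs, h1f]
      rw [e1, ← e2, hdis, e3]
    have hθfst : θ.map Prod.fst = μ := by
      rw [hθdef, Measure.map_map measurable_fst hg]
      exact hηsnd
    have hθsnd : θ.map Prod.snd = ξ := by
      rw [hθdef, Measure.map_map measurable_snd hg]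
      have : ((Prod.snd ∘ fun q : (ℝ × ℝ) × ℝ => (q.2, q.1.2))) =
          (Prod.snd ∘ Prod.fst : (ℝ × ℝ) × ℝ → ℝ) := rfl
      rw [this, ← Measure.map_map measurable_snd measurable_fst, hηfst, h2s]
    have hcostm : Measurable (fun p : ℝ × ℝ => (‖p.1 - p.2‖₊ : ℝ≥0∞)) :=
      (measurable_fst.sub measurable_snd).enorm
    have hm1 : Measurable (fun q : (ℝ × ℝ) × ℝ => (‖q.2 - q.1.1‖₊ : ℝ≥0∞)) :=
      (measurable_snd.sub measurable_fst.fst).enorm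
    have hm2 : Measurable (fun q : (ℝ × ℝ) × ℝ => (‖q.1.1 - q.1.2‖₊ : ℝ≥0∞)) :=
      (measurable_fst.fst.sub measurable_fst.snd).enorm
    have hθcost : ∫⁻ p, ‖p.1 - p.2‖₊ ∂θ = ∫⁻ q, (‖q.2 - q.1.2‖₊ : ℝ≥0∞) ∂η := by
      rw [hθdef, lintegral_map hcostm hg]
    have term2 : ∫⁻ p, ‖p.1 - p.2‖₊ ∂π₂ = ∫⁻ q, (‖q.1.1 - q.1.2‖₊ : ℝ≥0∞) ∂η := by
      rw [← hηfst, lintegral_map hcostm measurable_fst]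
    have term1 : ∫⁻ q, (‖q.2 - q.1.1‖₊ : ℝ≥0∞) ∂η = ∫⁻ p, ‖p.1 - p.2‖₊ ∂π₁ := by
      rw [hηdef, Measure.lintegral_compProd hm1]
      simp_rw [hκ'def, ProbabilityTheory.Kernel.comap_apply]
      have hGm : Measurable fun y : ℝ => ∫⁻ x, (‖x - y‖₊ : ℝ≥0∞) ∂(κ y) :=
        Measurable.lintegral_kernel_prod_right' ((measurable_snd.sub measurable_fst).enorm)
      have e1 : ∫⁻ p : ℝ × ℝ, (∫⁻ x, (‖x - p.1‖₊ : ℝ≥0∞) ∂(κ p.1)) ∂π₂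
          = ∫⁻ y, ∫⁻ x, (‖x - y‖₊ : ℝ≥0∞) ∂(κ y) ∂ν := by
        rw [← h2f]
        exact (lintegral_map hGm measurable_fst).symm
      rw [e1, ← Measure.lintegral_compProd (show Measurable (fun p : ℝ × ℝ => (‖p.2 - p.1‖₊ : ℝ≥0∞)) from
          (measurable_snd.sub measurable_fst).enorm), hdis,
        hρdef, lintegral_map (show Measurable (fun p : ℝ × ℝ => (‖p.2 - p.1‖₊ : ℝ≥0∞)) from
          (measurable_snd.sub measurable_fst).enorm) measurable_swap]
      simp
    calc W1 μ ξ ≤ ∫⁻ p, ‖p.1 - p.2‖₊ ∂θ := W1_le_cost θ hθfst hθsnd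
      _ = ∫⁻ q, (‖q.2 - q.1.2‖₊ : ℝ≥0∞) ∂η := hθcost
      _ ≤ ∫⁻ q, ((‖q.2 - q.1.1‖₊ : ℝ≥0∞) + (‖q.1.1 - q.1.2‖₊ : ℝ≥0∞)) ∂η := by
          refine lintegral_mono fun q => ?_
          simp only [← nndist_eq_nnnorm, ← ENNReal.coe_add]
          exact_mod_cast nndist_triangle _ q.1.1 _
      _ = (∫⁻ q, (‖q.2 - q.1.1‖₊ : ℝ≥0∞) ∂η) + ∫⁻ q, (‖q.1.1 - q.1.2‖₊ : ℝ≥0∞) ∂η :=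
          lintegral_add_left hm1 _
      _ ≤ (∫⁻ p, ‖p.1 - p.2‖₊ ∂π₁) + ∫⁻ p, ‖p.1 - p.2‖₊ ∂π₂ := by
          rw [term1, ← term2]
  simp only [W1]
  simp_rw [ENNReal.iInf_add, ENNReal.add_iInf]
  exact le_iInf fun π₁ => le_iInf fun h1 => le_iInf fun h2 => le_iInf fun π₂ =>
    le_iInf fun h3 => le_iInf fun h4 => key π₁ h1 h2 π₂ h3 h4

/-- The max-sliced 1-Wasserstein distance is approximated within
`ε (E‖X‖ + E‖Y‖)` by the maximum over a finite ε-net of the unit sphere. -/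
theorem max_sliced_W1_net_approx {d : ℕ}
    {Ω : Type*} [MeasurableSpace Ω] (P : Measure Ω) [IsProbabilityMeasure P]
    (X Y : Ω → EuclideanSpace ℝ (Fin d))
    (hXm : AEMeasurable X P) (hYm : AEMeasurable Y P)
    (hX : Integrable (fun ω => ‖X ω‖) P) (hY : Integrable (fun ω => ‖Y ω‖) P)
    (ε : ℝ) (hε : 0 < ε)
    (Tε : Finset (EuclideanSpace ℝ (Fin d)))
    (hTsphere : ∀ t ∈ Tε, ‖t‖ = 1)
    (hTnet : ∀ s : EuclideanSpace ℝ (Fin d), ‖s‖ = 1 → ∃ t ∈ Tε, ‖s - t‖ ≤ ε) :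
    |(⨆ t : {t : EuclideanSpace ℝ (Fin d) // ‖t‖ = 1},
        W1 (P.map fun ω => ⟪(t : EuclideanSpace ℝ (Fin d)), X ω⟫)
           (P.map fun ω => ⟪(t : EuclideanSpace ℝ (Fin d)), Y ω⟫)).toReal -
      (⨆ t ∈ Tε, W1 (P.map fun ω => ⟪t, X ω⟫) (P.map fun ω => ⟪t, Y ω⟫)).toReal| ≤
    ε * ((∫ ω, ‖X ω‖ ∂P) + ∫ ω, ‖Y ω‖ ∂P) := by
  classical
  have hIX : (0:ℝ) ≤ ∫ ω, ‖X ω‖ ∂P := integral_nonneg fun ω => norm_nonneg _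
  have hIY : (0:ℝ) ≤ ∫ ω, ‖Y ω‖ ∂P := integral_nonneg fun ω => norm_nonneg _
  set CX : ℝ≥0∞ := ENNReal.ofReal (∫ ω, ‖X ω‖ ∂P) with hCX
  set CY : ℝ≥0∞ := ENNReal.ofReal (∫ ω, ‖Y ω‖ ∂P) with hCY
  have hprojX : ∀ t : EuclideanSpace ℝ (Fin d), AEMeasurable (fun ω => ⟪t, X ω⟫) P := by
    intro t
    exact ((continuous_const.inner continuous_id).measurable).comp_aemeasurable hXm
  have hprojY : ∀ t : EuclideanSpace ℝ (Fin d), AEMeasurable (fun ω => ⟪t, Y ω⟫) P := by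
    intro t
    exact ((continuous_const.inner continuous_id).measurable).comp_aemeasurable hYm
  -- Lipschitz estimate in the direction
  have hlip : ∀ (Z : Ω → EuclideanSpace ℝ (Fin d)), AEMeasurable Z P →
      Integrable (fun ω => ‖Z ω‖) P → ∀ s t : EuclideanSpace ℝ (Fin d),
      W1 (P.map fun ω => ⟪s, Z ω⟫) (P.map fun ω => ⟪t, Z ω⟫) ≤
        ENNReal.ofReal ‖s - t‖ * ENNReal.ofReal (∫ ω, ‖Z ω‖ ∂P) := by
    intro Z hZm hZint s t
    have hs : AEMeasurable (fun ω => ⟪s, Z ω⟫) P :=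
      ((continuous_const.inner continuous_id).measurable).comp_aemeasurable hZm
    have ht : AEMeasurable (fun ω => ⟪t, Z ω⟫) P :=
      ((continuous_const.inner continuous_id).measurable).comp_aemeasurable hZm
    refine (W1_map_le P hs ht).trans ?_
    have step1 : ∫⁻ ω, (‖⟪s, Z ω⟫ - ⟪t, Z ω⟫‖₊ : ℝ≥0∞) ∂P ≤
        ∫⁻ ω, ENNReal.ofReal ‖s - t‖ * ENNReal.ofReal ‖Z ω‖ ∂P := by
      refine lintegral_mono fun ω => ?_
      rw [← enorm_eq_nnnorm, ← ofReal_norm, ← ENNReal.ofReal_mul (norm_nonneg _)]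
      refine ENNReal.ofReal_le_ofReal ?_
      have : ⟪s, Z ω⟫ - ⟪t, Z ω⟫ = ⟪s - t, Z ω⟫ := (inner_sub_left _ _ _).symm
      rw [this]
      exact norm_inner_le_norm _ _
    refine step1.trans_eq ?_
    rw [lintegral_const_mul' _ _ ENNReal.ofReal_ne_top,
      ← ofReal_integral_eq_lintegral_ofReal hZint
        (Filter.Eventually.of_forall fun ω => norm_nonneg _)]
  -- uniform bound
  have hbound : ∀ t : EuclideanSpace ℝ (Fin d), ‖t‖ = 1 →
      W1 (P.map fun ω => ⟪t, X ω⟫) (P.map fun ω => ⟪t, Y ω⟫) ≤ CX + CY := by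
    intro t ht
    refine (W1_map_le P (hprojX t) (hprojY t)).trans ?_
    have step1 : ∫⁻ ω, (‖⟪t, X ω⟫ - ⟪t, Y ω⟫‖₊ : ℝ≥0∞) ∂P ≤
        ∫⁻ ω, (ENNReal.ofReal ‖X ω‖ + ENNReal.ofReal ‖Y ω‖) ∂P := by
      refine lintegral_mono fun ω => ?_
      rw [← enorm_eq_nnnorm, ← ofReal_norm, ← ENNReal.ofReal_add (norm_nonneg _) (norm_nonneg _)]
      refine ENNReal.ofReal_le_ofReal ?_
      refine (norm_sub_le _ _).trans ?_
      have h1 : ‖⟪t, X ω⟫‖ ≤ ‖X ω‖ := by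
        refine (norm_inner_le_norm _ _).trans ?_
        rw [ht, one_mul]
      have h2 : ‖⟪t, Y ω⟫‖ ≤ ‖Y ω‖ := by
        refine (norm_inner_le_norm _ _).trans ?_
        rw [ht, one_mul]
      exact add_le_add h1 h2
    refine step1.trans_eq ?_
    rw [lintegral_add_left' (hXm.norm.ennreal_ofReal) _,
      ← ofReal_integral_eq_lintegral_ofReal hX (Filter.Eventually.of_forall fun ω => norm_nonneg _),
      ← ofReal_integral_eq_lintegral_ofReal hY (Filter.Eventually.of_forall fun ω => norm_nonneg _)]
  -- key approximation step
  have key : ∀ s t : EuclideanSpace ℝ (Fin d), ‖s - t‖ ≤ ε →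
      W1 (P.map fun ω => ⟪s, X ω⟫) (P.map fun ω => ⟪s, Y ω⟫) ≤
        W1 (P.map fun ω => ⟪t, X ω⟫) (P.map fun ω => ⟪t, Y ω⟫)
          + ENNReal.ofReal ε * (CX + CY) := by
    intro s t hst
    haveI := Measure.isProbabilityMeasure_map (hprojX s)
    haveI := Measure.isProbabilityMeasure_map (hprojX t)
    haveI := Measure.isProbabilityMeasure_map (hprojY s)
    haveI := Measure.isProbabilityMeasure_map (hprojY t)
    have tri1 := W1_triangle (P.map fun ω => ⟪s, X ω⟫) (P.map fun ω => ⟪t, X ω⟫)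
      (P.map fun ω => ⟪s, Y ω⟫)
    have tri2 := W1_triangle (P.map fun ω => ⟪t, X ω⟫) (P.map fun ω => ⟪t, Y ω⟫)
      (P.map fun ω => ⟪s, Y ω⟫)
    have lX : W1 (P.map fun ω => ⟪s, X ω⟫) (P.map fun ω => ⟪t, X ω⟫) ≤
        ENNReal.ofReal ε * CX := by
      refine (hlip X hXm hX s t).trans ?_
      exact mul_le_mul_left (ENNReal.ofReal_le_ofReal hst) _
    have lY : W1 (P.map fun ω => ⟪t, Y ω⟫) (P.map fun ω => ⟪s, Y ω⟫) ≤
        ENNReal.ofReal ε * CY := by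
      refine (hlip Y hYm hY t s).trans ?_
      refine mul_le_mul_left (ENNReal.ofReal_le_ofReal ?_) _
      rw [norm_sub_rev]; exact hst
    calc W1 (P.map fun ω => ⟪s, X ω⟫) (P.map fun ω => ⟪s, Y ω⟫)
        ≤ W1 (P.map fun ω => ⟪s, X ω⟫) (P.map fun ω => ⟪t, X ω⟫)
          + W1 (P.map fun ω => ⟪t, X ω⟫) (P.map fun ω => ⟪s, Y ω⟫) := tri1
      _ ≤ W1 (P.map fun ω => ⟪s, X ω⟫) (P.map fun ω => ⟪t, X ω⟫)
          + (W1 (P.map fun ω => ⟪t, X ω⟫) (P.map fun ω => ⟪t, Y ω⟫)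
            + W1 (P.map fun ω => ⟪t, Y ω⟫) (P.map fun ω => ⟪s, Y ω⟫)) :=
          add_le_add_right tri2 _
      _ ≤ ENNReal.ofReal ε * CX
          + (W1 (P.map fun ω => ⟪t, X ω⟫) (P.map fun ω => ⟪t, Y ω⟫)
            + ENNReal.ofReal ε * CY) := add_le_add lX (add_le_add_right lY _)
      _ = W1 (P.map fun ω => ⟪t, X ω⟫) (P.map fun ω => ⟪t, Y ω⟫)
          + ENNReal.ofReal ε * (CX + CY) := by ring
  by_cases hne : ∃ s : EuclideanSpace ℝ (Fin d), ‖s‖ = 1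
  · set S : ℝ≥0∞ := ⨆ t : {t : EuclideanSpace ℝ (Fin d) // ‖t‖ = 1},
        W1 (P.map fun ω => ⟪(t : EuclideanSpace ℝ (Fin d)), X ω⟫)
           (P.map fun ω => ⟪(t : EuclideanSpace ℝ (Fin d)), Y ω⟫) with hS
    set M : ℝ≥0∞ := ⨆ t ∈ Tε, W1 (P.map fun ω => ⟪t, X ω⟫) (P.map fun ω => ⟪t, Y ω⟫) with hM
    have hMS : M ≤ S := by
      refine iSup₂_le fun t ht => ?_
      exact le_iSup (fun u : {t : EuclideanSpace ℝ (Fin d) // ‖t‖ = 1} =>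
        W1 (P.map fun ω => ⟪(u : EuclideanSpace ℝ (Fin d)), X ω⟫)
           (P.map fun ω => ⟪(u : EuclideanSpace ℝ (Fin d)), Y ω⟫)) ⟨t, hTsphere t ht⟩
    have hSM : S ≤ M + ENNReal.ofReal ε * (CX + CY) := by
      refine iSup_le fun u => ?_
      obtain ⟨t, htT, hst⟩ := hTnet u u.2
      refine (key u t hst).trans (add_le_add_left ?_ _)
      exact le_biSup (fun t => W1 (P.map fun ω => ⟪t, X ω⟫) (P.map fun ω => ⟪t, Y ω⟫)) htT
    have hS_top : S ≠ ∞ := by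
      refine ne_of_lt (lt_of_le_of_lt (iSup_le fun u => hbound u u.2) ?_)
      exact ENNReal.add_lt_top.2 ⟨ENNReal.ofReal_lt_top, ENNReal.ofReal_lt_top⟩
    have hM_top : M ≠ ∞ := ne_top_of_le_ne_top hS_top hMS
    have hD_top : ENNReal.ofReal ε * (CX + CY) ≠ ∞ := by
      exact ENNReal.mul_ne_top ENNReal.ofReal_ne_top
        (ENNReal.add_ne_top.2 ⟨ENNReal.ofReal_ne_top, ENNReal.ofReal_ne_top⟩)
    have hMrS : M.toReal ≤ S.toReal := ENNReal.toReal_mono hS_top hMS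
    rw [abs_of_nonneg (sub_nonneg.2 hMrS), sub_le_iff_le_add]
    have hDval : (ENNReal.ofReal ε * (CX + CY)).toReal =
        ε * ((∫ ω, ‖X ω‖ ∂P) + ∫ ω, ‖Y ω‖ ∂P) := by
      rw [ENNReal.toReal_mul, ENNReal.toReal_ofReal hε.le, hCX, hCY,
        ENNReal.toReal_add ENNReal.ofReal_ne_top ENNReal.ofReal_ne_top,
        ENNReal.toReal_ofReal hIX, ENNReal.toReal_ofReal hIY]
    have hfin : S.toReal ≤ (M + ENNReal.ofReal ε * (CX + CY)).toReal := by
      refine ENNReal.toReal_mono ?_ hSM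
      exact ENNReal.add_ne_top.2 ⟨hM_top, hD_top⟩
    rw [ENNReal.toReal_add hM_top hD_top, hDval] at hfin
    linarith
  · haveI : IsEmpty {t : EuclideanSpace ℝ (Fin d) // ‖t‖ = 1} := ⟨fun t => hne ⟨t, t.2⟩⟩
    have hT : Tε = ∅ := Finset.eq_empty_of_forall_notMem fun t ht => hne ⟨t, hTsphere t ht⟩
    have h1 : (⨆ t : {t : EuclideanSpace ℝ (Fin d) // ‖t‖ = 1},
        W1 (P.map fun ω => ⟪(t : EuclideanSpace ℝ (Fin d)), X ω⟫)
           (P.map fun ω => ⟪(t : EuclideanSpace ℝ (Fin d)), Y ω⟫)) = 0 := by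
      rw [iSup_of_empty]; rfl
    have h2 : (⨆ t ∈ Tε, W1 (P.map fun ω => ⟪t, X ω⟫) (P.map fun ω => ⟪t, Y ω⟫)) = 0 := by
      simp [hT]
    rw [h1, h2]
    simp only [ENNReal.toReal_zero, sub_zero, abs_zero]
    exact mul_nonneg hε.le (add_nonneg hIX hIY)
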